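/- Let ŷ : 𝒳 → ℝ and for each x ∈ 𝒳 let f̂_x : ℝ → ℝ be strictly increasing. Define the generalized residual-distribution forecast G_x(y) = (1/n)∑ᵢ 1{ŷ(x) + f̂_x⁻¹(f̂_{xᵢ}(yᵢ − ŷ(xᵢ))) ≤ y}. Then for each index i, G_{xᵢ}(yᵢ) = (1/n)·#{j : f̂_{xⱼ}(yⱼ − ŷ(xⱼ)) ≤ f̂_{xᵢ}(yᵢ − ŷ(xᵢ))}, and hence G is in-sample probabilistically calibrated with respect to the empirical measure of (x₁,y₁),…,(xₙ,yₙ). -/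

import Mathlib

open Classical Finset in
private lemma rank_le_aux {n : ℕ} (r : Fin n → ℝ) (α : ℝ) (hα : 0 < α) :
    ((univ.filter fun i =>
        ((univ.filter fun j => r j ≤ r i).card : ℝ) ≤ α * n).card : ℝ) ≤ α * n := by
  set S := univ.filter fun i =>
      ((univ.filter fun j => r j ≤ r i).card : ℝ) ≤ α * n with hS
  rcases S.eq_empty_or_nonempty with h | h
  · simp [h]; positivity
  · obtain ⟨i0, hi0, hmax⟩ := S.exists_max_image r h
    have hsub : S ⊆ univ.filter fun j => r j ≤ r i0 := fun j hj => by
      simp only [mem_filter, mem_univ, true_and]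
      exact hmax j hj
    calc (S.card : ℝ) ≤ ((univ.filter fun j => r j ≤ r i0).card : ℝ) := by
          exact_mod_cast Finset.card_le_card hsub
      _ ≤ α * n := (mem_filter.mp hi0).2

open Classical Finset in
private lemma rank_ge_aux {n : ℕ} (hn : 0 < n) (r : Fin n → ℝ) (α : ℝ) (hα : α < 1) :
    α * n ≤ ((univ.filter fun i =>
        ((univ.filter fun j => r j < r i).card : ℝ) < α * n).card : ℝ) := by
  set T := univ.filter fun i =>
      ((univ.filter fun j => r j < r i).card : ℝ) < α * n with hT
  by_cases h : ∀ i, i ∈ T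
  · have hTu : T = univ := eq_univ_iff_forall.mpr h
    rw [hTu, card_univ, Fintype.card_fin]
    have hn' : (0 : ℝ) ≤ n := Nat.cast_nonneg n
    nlinarith
  · push_neg at h
    obtain ⟨i1, hi1⟩ := h
    set Tc := univ.filter fun i =>
        ¬ ((univ.filter fun j => r j < r i).card : ℝ) < α * n with hTc
    have hi1' : i1 ∈ Tc := by
      simp only [hTc, mem_filter, mem_univ, true_and]
      intro hc
      exact hi1 (by simp only [hT, mem_filter, mem_univ, true_and]; exact hc)
    obtain ⟨i0, hi0, hmin⟩ := Tc.exists_min_image r ⟨i1, hi1'⟩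
    have hsub : (univ.filter fun j => r j < r i0) ⊆ T := fun j hj => by
      by_contra hjT
      have hjTc : j ∈ Tc := by
        simp only [hTc, mem_filter, mem_univ, true_and]
        intro hc
        exact hjT (by simp only [hT, mem_filter, mem_univ, true_and]; exact hc)
      have h1 := hmin j hjTc
      have h2 := (mem_filter.mp hj).2
      linarith
    have h1 : α * n ≤ ((univ.filter fun j => r j < r i0).card : ℝ) := by
      have := (mem_filter.mp hi0).2
      linarith [not_lt.mp this]
    calc α * n ≤ ((univ.filter fun j => r j < r i0).card : ℝ) := h1
      _ ≤ (T.card : ℝ) := by exact_mod_cast Finset.card_le_card hsub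

open Classical Finset in
private lemma leftLim_count {n : ℕ} (c : Fin n → ℝ) (t0 : ℝ) :
    Function.leftLim (fun t => ((univ.filter fun j => c j ≤ t).card : ℝ) / n) t0
      = ((univ.filter fun j => c j < t0).card : ℝ) / n := by
  have hex : ∃ a, a < t0 ∧ ∀ j, c j < t0 → c j ≤ a := by
    rcases (univ.filter fun j => c j < t0).eq_empty_or_nonempty with h | h
    · refine ⟨t0 - 1, by linarith, fun j hj => ?_⟩
      rw [Finset.filter_eq_empty_iff] at h
      exact absurd hj (h (mem_univ j))
    · obtain ⟨j0, hj0, hmax⟩ := (univ.filter fun j => c j < t0).exists_max_image c h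
      exact ⟨c j0, (mem_filter.mp hj0).2,
        fun j hj => hmax j (mem_filter.mpr ⟨mem_univ j, hj⟩)⟩
  obtain ⟨a, ha, hafar⟩ := hex
  have hmem : Set.Ioo a t0 ∈ nhdsWithin t0 (Set.Iio t0) :=
    Ioo_mem_nhdsLT_of_mem ⟨ha, le_refl t0⟩
  have heq : (fun t => ((univ.filter fun j => c j ≤ t).card : ℝ) / n)
      =ᶠ[nhdsWithin t0 (Set.Iio t0)]
      (fun _ => ((univ.filter fun j => c j < t0).card : ℝ) / n) := by
    filter_upwards [hmem] with t ht
    have hsets : (univ.filter fun j => c j ≤ t) = (univ.filter fun j => c j < t0) := by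
      ext j
      simp only [mem_filter, mem_univ, true_and]
      constructor
      · intro hjt; exact lt_of_le_of_lt hjt ht.2
      · intro hjt; exact le_of_lt (lt_of_le_of_lt (hafar j hjt) ht.1)
    rw [hsets]
  apply leftLim_eq_of_tendsto
  · exact Filter.Tendsto.congr' heq.symm tendsto_const_nhds

open Classical in
/-- For the generalised residual-distribution forecast, `G_{xᵢ}(yᵢ)` is the normalised
rank of the transformed residual, and the procedure is in-sample probabilistically
calibrated with respect to the empirical measure. -/
theorem stmt_3 {X : Type*} (n : ℕ) (hn : 0 < n) (x : Fin n → X) (y : Fin n → ℝ)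
    (yhat : X → ℝ) (f : X → ℝ → ℝ)
    (hfmono : ∀ x', StrictMono (f x')) (hfbij : ∀ x', Function.Bijective (f x'))
    (G : X → ℝ → ℝ)
    (hG : ∀ x' t, G x' t =
      ((Finset.univ.filter fun i =>
        yhat x' + Function.invFun (f x') (f (x i) (y i - yhat (x i))) ≤ t).card : ℝ) / n) :
    (∀ i, G (x i) (y i) =
      ((Finset.univ.filter fun j =>
        f (x j) (y j - yhat (x j)) ≤ f (x i) (y i - yhat (x i))).card : ℝ) / n) ∧
    (∀ α ∈ Set.Ioo (0 : ℝ) 1,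
      ((Finset.univ.filter fun i => G (x i) (y i) ≤ α).card : ℝ) / n ≤ α ∧
      α ≤ ((Finset.univ.filter fun i =>
            Function.leftLim (G (x i)) (y i) < α).card : ℝ) / n) := by
  set r : Fin n → ℝ := fun j => f (x j) (y j - yhat (x j)) with hr
  have hinv : ∀ i j, f (x i) (Function.invFun (f (x i)) (r j)) = r j := fun i j =>
    Function.invFun_eq ((hfbij (x i)).2 (r j))
  have key_le : ∀ i j (t : ℝ),
      (yhat (x i) + Function.invFun (f (x i)) (r j) ≤ t) ↔ r j ≤ f (x i) (t - yhat (x i)) := by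
    intro i j t
    rw [add_comm, ← le_sub_iff_add_le, ← (hfmono (x i)).le_iff_le, hinv]
  have key_lt : ∀ i j (t : ℝ),
      (yhat (x i) + Function.invFun (f (x i)) (r j) < t) ↔ r j < f (x i) (t - yhat (x i)) := by
    intro i j t
    rw [add_comm, ← lt_sub_iff_add_lt, ← (hfmono (x i)).lt_iff_lt, hinv]
  have hfix : ∀ i, f (x i) (y i - yhat (x i)) = r i := fun i => rfl
  -- Part 1
  have part1 : ∀ i, G (x i) (y i) =
      ((Finset.univ.filter fun j => r j ≤ r i).card : ℝ) / n := by
    intro i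
    rw [hG]
    have hsets : (Finset.univ.filter fun j =>
        yhat (x i) + Function.invFun (f (x i)) (f (x j) (y j - yhat (x j))) ≤ y i)
        = Finset.univ.filter fun j => r j ≤ r i := by
      ext j
      simp only [Finset.mem_filter, Finset.mem_univ, true_and]
      rw [show f (x j) (y j - yhat (x j)) = r j from rfl, key_le i j (y i), hfix]
    rw [hsets]
  -- left limits
  have part1' : ∀ i, Function.leftLim (G (x i)) (y i) =
      ((Finset.univ.filter fun j => r j < r i).card : ℝ) / n := by
    intro i
    have hGfun : G (x i) = fun t =>
        ((Finset.univ.filter fun j =>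
          yhat (x i) + Function.invFun (f (x i)) (r j) ≤ t).card : ℝ) / n := by
      funext t; exact hG (x i) t
    rw [hGfun, leftLim_count]
    have hsets : (Finset.univ.filter fun j =>
        yhat (x i) + Function.invFun (f (x i)) (r j) < y i)
        = Finset.univ.filter fun j => r j < r i := by
      ext j
      simp only [Finset.mem_filter, Finset.mem_univ, true_and]
      rw [key_lt i j (y i), hfix]
    rw [hsets]
  refine ⟨part1, ?_⟩
  intro α hα
  have hnpos : (0 : ℝ) < n := by exact_mod_cast hn
  constructor
  · -- first calibration inequality
    have hset : (Finset.univ.filter fun i => G (x i) (y i) ≤ α) =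
        Finset.univ.filter fun i =>
          ((Finset.univ.filter fun j => r j ≤ r i).card : ℝ) ≤ α * n := by
      ext i
      simp only [Finset.mem_filter, Finset.mem_univ, true_and]
      rw [part1, div_le_iff₀ hnpos]
    rw [hset, div_le_iff₀ hnpos]
    exact rank_le_aux r α hα.1
  · -- second calibration inequality
    have hset : (Finset.univ.filter fun i => Function.leftLim (G (x i)) (y i) < α) =
        Finset.univ.filter fun i =>
          ((Finset.univ.filter fun j => r j < r i).card : ℝ) < α * n := by
      ext i
      simp only [Finset.mem_filter, Finset.mem_univ, true_and]
      rw [part1', div_lt_iff₀ hnpos]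
    rw [hset, le_div_iff₀ hnpos]
    exact rank_ge_aux hn r α hα.2
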